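/- The subgroup μ(G), the kernel of the derived map ρ': [G,Gφ] → G', [g,hφ] ↦ [g,h], is contained in the center of ν(G). -/

import Mathlib

open Monoid Subgroup
open scoped commutatorElement

/-- The relators of the presentation of ν(G): for all g, h, k ∈ G,
`[g,hφ]^k = [g^k,(h^k)φ]` and `[g,hφ]^(kφ) = [g^k,(h^k)φ]` (exponents denote conjugation). -/
def nuRels (G : Type*) [Group G] : Set (Monoid.Coprod G G) :=
  { r | ∃ g h k : G,
      r = ((Coprod.inl k)⁻¹ * ⁅(Coprod.inl g : Coprod G G), Coprod.inr h⁆ * Coprod.inl k) *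
          (⁅(Coprod.inl (k⁻¹ * g * k) : Coprod G G), Coprod.inr (k⁻¹ * h * k)⁆)⁻¹ ∨
      r = ((Coprod.inr k)⁻¹ * ⁅(Coprod.inl g : Coprod G G), Coprod.inr h⁆ * Coprod.inr k) *
          (⁅(Coprod.inl (k⁻¹ * g * k) : Coprod G G), Coprod.inr (k⁻¹ * h * k)⁆)⁻¹ }

/-- The group ν(G): the quotient of the free product G * Gφ by the defining relations. -/
def Nu (G : Type*) [Group G] := Coprod G G ⧸ Subgroup.normalClosure (nuRels G)

instance (G : Type*) [Group G] : Group (Nu G) := QuotientGroup.Quotient.group _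

/-- The canonical map G → ν(G) (the copy `G`). -/
def nuL (G : Type*) [Group G] : G →* Nu G := (QuotientGroup.mk' _).comp Coprod.inl

/-- The canonical map G → ν(G) (the copy `Gφ`). -/
def nuR (G : Type*) [Group G] : G →* Nu G := (QuotientGroup.mk' _).comp Coprod.inr

section NuAux

variable {G : Type*} [Group G]


lemma nu_mk_rel {w : Coprod G G} (hw : w ∈ nuRels G) :
    (QuotientGroup.mk' (Subgroup.normalClosure (nuRels G))) w = 1 := by
  rw [QuotientGroup.mk'_apply, QuotientGroup.eq_one_iff]
  exact Subgroup.subset_normalClosure hw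

lemma nu_rel1 (g h k : G) :
    (nuL G k)⁻¹ * ⁅nuL G g, nuR G h⁆ * nuL G k
      = ⁅nuL G (k⁻¹ * g * k), nuR G (k⁻¹ * h * k)⁆ := by
  have h1 := nu_mk_rel (G := G)
    (w := ((Coprod.inl k)⁻¹ * ⁅(Coprod.inl g : Coprod G G), Coprod.inr h⁆ * Coprod.inl k) *
          (⁅(Coprod.inl (k⁻¹ * g * k) : Coprod G G), Coprod.inr (k⁻¹ * h * k)⁆)⁻¹)
    ⟨g, h, k, Or.inl rfl⟩
  rw [← mul_inv_eq_one]
  exact h1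

lemma nu_rel2 (g h k : G) :
    (nuR G k)⁻¹ * ⁅nuL G g, nuR G h⁆ * nuR G k
      = ⁅nuL G (k⁻¹ * g * k), nuR G (k⁻¹ * h * k)⁆ := by
  have h1 := nu_mk_rel (G := G)
    (w := ((Coprod.inr k)⁻¹ * ⁅(Coprod.inl g : Coprod G G), Coprod.inr h⁆ * Coprod.inr k) *
          (⁅(Coprod.inl (k⁻¹ * g * k) : Coprod G G), Coprod.inr (k⁻¹ * h * k)⁆)⁻¹)
    ⟨g, h, k, Or.inr rfl⟩
  rw [← mul_inv_eq_one]
  exact h1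

lemma nu_rel1' {α β k α' β' : G} (hα : k⁻¹ * α * k = α') (hβ : k⁻¹ * β * k = β') :
    (nuL G k)⁻¹ * ⁅nuL G α, nuR G β⁆ * nuL G k = ⁅nuL G α', nuR G β'⁆ := by
  subst hα; subst hβ; exact nu_rel1 α β k

lemma nu_rel2' {α β k α' β' : G} (hα : k⁻¹ * α * k = α') (hβ : k⁻¹ * β * k = β') :
    (nuR G k)⁻¹ * ⁅nuL G α, nuR G β⁆ * nuR G k = ⁅nuL G α', nuR G β'⁆ := by
  subst hα; subst hβ; exact nu_rel2 α β k

/-- Rocco's key identity: `⁅⁅g,hφ⁆, xφ⁆ = ⁅⁅g,h⁆, xφ⁆` in ν(G), in the form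
`⁅g^x, (h^x)φ⁆ = ⁅g,hφ⁆ * ⁅[g,h], xφ⁆`. -/
lemma nu_core (g h q : G) :
    ⁅⁅nuL G g, nuR G h⁆, nuR G q⁆ = ⁅nuL G ⁅g, h⁆, nuR G q⁆ := by
  have S1 : (nuR G h⁻¹)⁻¹ * ⁅nuL G g⁻¹, nuR G (h⁻¹ * q * h)⁆ * nuR G h⁻¹
      = nuL G g⁻¹ * ⁅⁅nuL G g, nuR G h⁆, nuR G q⁆ * (nuL G g⁻¹)⁻¹ * ⁅nuL G g⁻¹, nuR G q⁆ := by
    simp only [map_mul, map_inv, commutatorElement_def]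
    group
  have S2 : (nuR G h⁻¹)⁻¹ * ⁅nuL G g⁻¹, nuR G (h⁻¹ * q * h)⁆ * nuR G h⁻¹
      = ⁅nuL G (h * g⁻¹ * h⁻¹), nuR G q⁆ :=
    nu_rel2' (by group) (by group)
  have E : ⁅nuL G (h * g⁻¹ * h⁻¹), nuR G q⁆
      = nuL G g⁻¹ * ⁅⁅nuL G g, nuR G h⁆, nuR G q⁆ * (nuL G g⁻¹)⁻¹ * ⁅nuL G g⁻¹, nuR G q⁆ :=
    S2.symm.trans S1
  have S3 : (nuL G g⁻¹)⁻¹ * ⁅nuL G (h * g⁻¹ * h⁻¹), nuR G q⁆ * nuL G g⁻¹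
      = ⁅nuL G (g * h * g⁻¹ * h⁻¹ * g⁻¹), nuR G (g * q * g⁻¹)⁆ :=
    nu_rel1' (by group) (by group)
  have S4 : (nuL G g⁻¹)⁻¹ * ⁅nuL G g⁻¹, nuR G q⁆ * nuL G g⁻¹
      = ⁅nuL G g⁻¹, nuR G (g * q * g⁻¹)⁆ :=
    nu_rel1' (by group) (by group)
  have S5 : ⁅nuL G (g * h * g⁻¹ * h⁻¹ * g⁻¹), nuR G (g * q * g⁻¹)⁆ *
        ⁅nuL G g⁻¹, nuR G (g * q * g⁻¹)⁆⁻¹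
      = (nuL G g)⁻¹ * ⁅nuL G (g * (g * h * g⁻¹ * h⁻¹) * g⁻¹), nuR G (g * q * g⁻¹)⁆ * nuL G g := by
    simp only [map_mul, map_inv, commutatorElement_def]
    group
  have S6 : (nuL G g)⁻¹ * ⁅nuL G (g * (g * h * g⁻¹ * h⁻¹) * g⁻¹), nuR G (g * q * g⁻¹)⁆ * nuL G g
      = ⁅nuL G ⁅g, h⁆, nuR G q⁆ :=
    nu_rel1' (by group) (by group)
  calc ⁅⁅nuL G g, nuR G h⁆, nuR G q⁆
      = (nuL G g⁻¹)⁻¹ * (nuL G g⁻¹ * ⁅⁅nuL G g, nuR G h⁆, nuR G q⁆ * (nuL G g⁻¹)⁻¹ *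
          ⁅nuL G g⁻¹, nuR G q⁆) * nuL G g⁻¹ *
          ((nuL G g⁻¹)⁻¹ * ⁅nuL G g⁻¹, nuR G q⁆ * nuL G g⁻¹)⁻¹ := by group
    _ = (nuL G g⁻¹)⁻¹ * ⁅nuL G (h * g⁻¹ * h⁻¹), nuR G q⁆ * nuL G g⁻¹ *
          ((nuL G g⁻¹)⁻¹ * ⁅nuL G g⁻¹, nuR G q⁆ * nuL G g⁻¹)⁻¹ := by rw [← E]
    _ = ⁅nuL G (g * h * g⁻¹ * h⁻¹ * g⁻¹), nuR G (g * q * g⁻¹)⁆ *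
          ⁅nuL G g⁻¹, nuR G (g * q * g⁻¹)⁆⁻¹ := by rw [S3, S4]
    _ = (nuL G g)⁻¹ * ⁅nuL G (g * (g * h * g⁻¹ * h⁻¹) * g⁻¹), nuR G (g * q * g⁻¹)⁆ * nuL G g := S5
    _ = ⁅nuL G ⁅g, h⁆, nuR G q⁆ := S6

/-- Conjugation of a mixed commutator by a mixed commutator is diagonal conjugation
by the corresponding commutator of `G`. -/
lemma nu_conj_gen (g h α β : G) :
    ⁅nuL G g, nuR G h⁆⁻¹ * ⁅nuL G α, nuR G β⁆ * ⁅nuL G g, nuR G h⁆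
      = ⁅nuL G (⁅g, h⁆⁻¹ * α * ⁅g, h⁆), nuR G (⁅g, h⁆⁻¹ * β * ⁅g, h⁆)⁆ := by
  calc ⁅nuL G g, nuR G h⁆⁻¹ * ⁅nuL G α, nuR G β⁆ * ⁅nuL G g, nuR G h⁆
      = (nuR G h⁻¹)⁻¹ * ((nuL G g⁻¹)⁻¹ * ((nuR G h)⁻¹ *
          ((nuL G g)⁻¹ * ⁅nuL G α, nuR G β⁆ * nuL G g) * nuR G h) * nuL G g⁻¹) * nuR G h⁻¹ := by
        simp only [map_inv, commutatorElement_def]; group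
    _ = (nuR G h⁻¹)⁻¹ * ((nuL G g⁻¹)⁻¹ * ((nuR G h)⁻¹ *
          ⁅nuL G (g⁻¹ * α * g), nuR G (g⁻¹ * β * g)⁆ * nuR G h) * nuL G g⁻¹) * nuR G h⁻¹ := by
        rw [nu_rel1 α β g]
    _ = (nuR G h⁻¹)⁻¹ * ((nuL G g⁻¹)⁻¹ *
          ⁅nuL G (h⁻¹ * (g⁻¹ * α * g) * h), nuR G (h⁻¹ * (g⁻¹ * β * g) * h)⁆ * nuL G g⁻¹) *
          nuR G h⁻¹ := by rw [nu_rel2]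
    _ = (nuR G h⁻¹)⁻¹ *
          ⁅nuL G ((g⁻¹)⁻¹ * (h⁻¹ * (g⁻¹ * α * g) * h) * g⁻¹),
            nuR G ((g⁻¹)⁻¹ * (h⁻¹ * (g⁻¹ * β * g) * h) * g⁻¹)⁆ * nuR G h⁻¹ := by rw [nu_rel1]
    _ = ⁅nuL G ((h⁻¹)⁻¹ * ((g⁻¹)⁻¹ * (h⁻¹ * (g⁻¹ * α * g) * h) * g⁻¹) * h⁻¹),
          nuR G ((h⁻¹)⁻¹ * ((g⁻¹)⁻¹ * (h⁻¹ * (g⁻¹ * β * g) * h) * g⁻¹) * h⁻¹)⁆ := by rw [nu_rel2]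
    _ = ⁅nuL G (⁅g, h⁆⁻¹ * α * ⁅g, h⁆), nuR G (⁅g, h⁆⁻¹ * β * ⁅g, h⁆)⁆ := by
        rw [show (h⁻¹)⁻¹ * ((g⁻¹)⁻¹ * (h⁻¹ * (g⁻¹ * α * g) * h) * g⁻¹) * h⁻¹
            = ⁅g, h⁆⁻¹ * α * ⁅g, h⁆ by group,
          show (h⁻¹)⁻¹ * ((g⁻¹)⁻¹ * (h⁻¹ * (g⁻¹ * β * g) * h) * g⁻¹) * h⁻¹
            = ⁅g, h⁆⁻¹ * β * ⁅g, h⁆ by group]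

/-- On `[G,Gφ]`, conjugation by `xφ` agrees with conjugation by `x`. -/
lemma nu_ab_conj {x : Nu G}
    (hx : x ∈ (⁅(nuL G).range, (nuR G).range⁆ : Subgroup (Nu G))) (q : G) :
    (nuL G q)⁻¹ * x * nuL G q = (nuR G q)⁻¹ * x * nuR G q := by
  rw [Subgroup.commutator_def] at hx
  induction hx using Subgroup.closure_induction with
  | mem y hy =>
    obtain ⟨u, hu, v, hv, rfl⟩ := hy
    obtain ⟨g, rfl⟩ := hu
    obtain ⟨h, rfl⟩ := hv
    exact (nu_rel1 g h q).trans (nu_rel2 g h q).symm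
  | one => group
  | mul y z hy hz ihy ihz =>
    calc (nuL G q)⁻¹ * (y * z) * nuL G q
        = ((nuL G q)⁻¹ * y * nuL G q) * ((nuL G q)⁻¹ * z * nuL G q) := by group
      _ = ((nuR G q)⁻¹ * y * nuR G q) * ((nuR G q)⁻¹ * z * nuR G q) := by rw [ihy, ihz]
      _ = (nuR G q)⁻¹ * (y * z) * nuR G q := by group
  | inv y hy ihy =>
    calc (nuL G q)⁻¹ * y⁻¹ * nuL G q = ((nuL G q)⁻¹ * y * nuL G q)⁻¹ := by group
      _ = ((nuR G q)⁻¹ * y * nuR G q)⁻¹ := by rw [ihy]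
      _ = (nuR G q)⁻¹ * y⁻¹ * nuR G q := by group

lemma nu_key (ρ : (⁅(nuL G).range, (nuR G).range⁆ : Subgroup (Nu G)) →* G)
    (hρ : ∀ (g h : G) (hm : ⁅nuL G g, nuR G h⁆ ∈ ⁅(nuL G).range, (nuR G).range⁆),
      ρ ⟨⁅nuL G g, nuR G h⁆, hm⟩ = ⁅g, h⁆)
    (x : Nu G) (hx : x ∈ (⁅(nuL G).range, (nuR G).range⁆ : Subgroup (Nu G))) :
    ∃ r : G, (∀ (hx' : x ∈ (⁅(nuL G).range, (nuR G).range⁆ : Subgroup (Nu G))),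
        ρ ⟨x, hx'⟩ = r) ∧
      (∀ α β : G, x⁻¹ * ⁅nuL G α, nuR G β⁆ * x
          = ⁅nuL G (r⁻¹ * α * r), nuR G (r⁻¹ * β * r)⁆) ∧
      (∀ q : G, ⁅x, nuR G q⁆ = ⁅nuL G r, nuR G q⁆) := by
  rw [Subgroup.commutator_def] at hx
  induction hx using Subgroup.closure_induction with
  | mem y hy =>
    obtain ⟨u, hu, v, hv, rfl⟩ := hy
    obtain ⟨g, rfl⟩ := hu
    obtain ⟨h, rfl⟩ := hv
    exact ⟨⁅g, h⁆, fun hx' => hρ g h hx', fun α β => nu_conj_gen g h α β,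
      fun q => nu_core g h q⟩
  | one =>
    refine ⟨1, fun hx' => ?_, fun α β => ?_, fun q => ?_⟩
    · have h1 : (⟨(1 : Nu G), hx'⟩ :
          (⁅(nuL G).range, (nuR G).range⁆ : Subgroup (Nu G))) = 1 := rfl
      rw [h1, map_one]
    · rw [show (1 : G)⁻¹ * α * 1 = α by group, show (1 : G)⁻¹ * β * 1 = β by group]
      group
    · rw [map_one]
  | mul y z hy hz ihy ihz =>
    obtain ⟨r, hr1, hr2, hr3⟩ := ihy
    obtain ⟨s, hs1, hs2, hs3⟩ := ihz
    have hyD : y ∈ (⁅(nuL G).range, (nuR G).range⁆ : Subgroup (Nu G)) := by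
      rw [Subgroup.commutator_def]; exact hy
    have hzD : z ∈ (⁅(nuL G).range, (nuR G).range⁆ : Subgroup (Nu G)) := by
      rw [Subgroup.commutator_def]; exact hz
    refine ⟨r * s, fun hx' => ?_, fun α β => ?_, fun q => ?_⟩
    · have h1 : (⟨y * z, hx'⟩ : (⁅(nuL G).range, (nuR G).range⁆ : Subgroup (Nu G)))
          = ⟨y, hyD⟩ * ⟨z, hzD⟩ := rfl
      rw [h1, map_mul, hr1 hyD, hs1 hzD]
    · calc (y * z)⁻¹ * ⁅nuL G α, nuR G β⁆ * (y * z)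
          = z⁻¹ * (y⁻¹ * ⁅nuL G α, nuR G β⁆ * y) * z := by group
        _ = z⁻¹ * ⁅nuL G (r⁻¹ * α * r), nuR G (r⁻¹ * β * r)⁆ * z := by rw [hr2]
        _ = ⁅nuL G (s⁻¹ * (r⁻¹ * α * r) * s), nuR G (s⁻¹ * (r⁻¹ * β * r) * s)⁆ := hs2 _ _
        _ = ⁅nuL G ((r * s)⁻¹ * α * (r * s)), nuR G ((r * s)⁻¹ * β * (r * s))⁆ := by
            rw [show s⁻¹ * (r⁻¹ * α * r) * s = (r * s)⁻¹ * α * (r * s) by group,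
              show s⁻¹ * (r⁻¹ * β * r) * s = (r * s)⁻¹ * β * (r * s) by group]
    · have hc : y⁻¹ * ⁅nuL G (r * s * r⁻¹), nuR G (r * q * r⁻¹)⁆ * y
          = ⁅nuL G s, nuR G q⁆ := by
        have h0 := hr2 (r * s * r⁻¹) (r * q * r⁻¹)
        rw [show r⁻¹ * (r * s * r⁻¹) * r = s by group,
          show r⁻¹ * (r * q * r⁻¹) * r = q by group] at h0
        exact h0
      have hd : (nuL G r⁻¹)⁻¹ * ⁅nuL G s, nuR G q⁆ * nuL G r⁻¹
          = ⁅nuL G (r * s * r⁻¹), nuR G (r * q * r⁻¹)⁆ :=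
        nu_rel1' (by group) (by group)
      calc ⁅y * z, nuR G q⁆ = y * ⁅z, nuR G q⁆ * y⁻¹ * ⁅y, nuR G q⁆ := by group
        _ = y * ⁅nuL G s, nuR G q⁆ * y⁻¹ * ⁅nuL G r, nuR G q⁆ := by rw [hs3, hr3]
        _ = y * (y⁻¹ * ⁅nuL G (r * s * r⁻¹), nuR G (r * q * r⁻¹)⁆ * y) * y⁻¹ *
              ⁅nuL G r, nuR G q⁆ := by rw [hc]
        _ = ⁅nuL G (r * s * r⁻¹), nuR G (r * q * r⁻¹)⁆ * ⁅nuL G r, nuR G q⁆ := by group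
        _ = ((nuL G r⁻¹)⁻¹ * ⁅nuL G s, nuR G q⁆ * nuL G r⁻¹) * ⁅nuL G r, nuR G q⁆ := by
            rw [hd]
        _ = ⁅nuL G (r * s), nuR G q⁆ := by
            simp only [map_mul, map_inv, commutatorElement_def]; group
  | inv y hy ihy =>
    obtain ⟨r, hr1, hr2, hr3⟩ := ihy
    have hyD : y ∈ (⁅(nuL G).range, (nuR G).range⁆ : Subgroup (Nu G)) := by
      rw [Subgroup.commutator_def]; exact hy
    refine ⟨r⁻¹, fun hx' => ?_, fun α β => ?_, fun q => ?_⟩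
    · have h1 : (⟨y⁻¹, hx'⟩ : (⁅(nuL G).range, (nuR G).range⁆ : Subgroup (Nu G)))
          = (⟨y, hyD⟩)⁻¹ := rfl
      rw [h1, map_inv, hr1 hyD]
    · have h0 := hr2 (r * α * r⁻¹) (r * β * r⁻¹)
      rw [show r⁻¹ * (r * α * r⁻¹) * r = α by group,
        show r⁻¹ * (r * β * r⁻¹) * r = β by group] at h0
      rw [show (r⁻¹)⁻¹ * α * r⁻¹ = r * α * r⁻¹ by group,
        show (r⁻¹)⁻¹ * β * r⁻¹ = r * β * r⁻¹ by group, ← h0]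
      group
    · have e := hr2 r q
      rw [show r⁻¹ * r * r = r by group] at e
      have e2 : (nuL G r)⁻¹ * ⁅nuL G r⁻¹, nuR G q⁆ * nuL G r
          = ⁅nuL G r⁻¹, nuR G (r⁻¹ * q * r)⁆ :=
        nu_rel1' (by group) (by group)
      have e3 : ⁅nuL G r⁻¹, nuR G q⁆ = ⁅nuL G r, nuR G (r⁻¹ * q * r)⁆⁻¹ := by
        calc ⁅nuL G r⁻¹, nuR G q⁆
            = nuL G r * ((nuL G r)⁻¹ * ⁅nuL G r⁻¹, nuR G q⁆ * nuL G r) * (nuL G r)⁻¹ := by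
              group
          _ = nuL G r * ⁅nuL G r⁻¹, nuR G (r⁻¹ * q * r)⁆ * (nuL G r)⁻¹ := by rw [e2]
          _ = ⁅nuL G r, nuR G (r⁻¹ * q * r)⁆⁻¹ := by
              simp only [map_mul, map_inv, commutatorElement_def]; group
      calc ⁅y⁻¹, nuR G q⁆ = y⁻¹ * ⁅y, nuR G q⁆⁻¹ * y := by group
        _ = y⁻¹ * ⁅nuL G r, nuR G q⁆⁻¹ * y := by rw [hr3]
        _ = (y⁻¹ * ⁅nuL G r, nuR G q⁆ * y)⁻¹ := by group
        _ = ⁅nuL G r, nuR G (r⁻¹ * q * r)⁆⁻¹ := by rw [e]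
        _ = ⁅nuL G r⁻¹, nuR G q⁆ := e3.symm

lemma nu_range_sup : ((nuL G).range ⊔ (nuR G).range : Subgroup (Nu G)) = ⊤ := by
  have h1 : (nuL G).range
      = Subgroup.map (QuotientGroup.mk' (Subgroup.normalClosure (nuRels G)))
          (Coprod.inl : G →* Coprod G G).range := MonoidHom.range_comp _ _
  have h2 : (nuR G).range
      = Subgroup.map (QuotientGroup.mk' (Subgroup.normalClosure (nuRels G)))
          (Coprod.inr : G →* Coprod G G).range := MonoidHom.range_comp _ _
  rw [h1, h2]
  exact (Subgroup.map_sup _ _ _).symm.trans (by rw [Coprod.range_inl_sup_range_inr,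
    Subgroup.map_top_of_surjective _ (QuotientGroup.mk'_surjective _)]; rfl)


end NuAux

/-- μ(G), the kernel of the derived map ρ' : [G,Gφ] → G', is contained in the
center of ν(G). -/
theorem nu_mu_central (G : Type*) [Group G]
    (ρ : (⁅(nuL G).range, (nuR G).range⁆ : Subgroup (Nu G)) →* G)
    (hρ : ∀ (g h : G) (hm : ⁅nuL G g, nuR G h⁆ ∈ ⁅(nuL G).range, (nuR G).range⁆),
      ρ ⟨⁅nuL G g, nuR G h⁆, hm⟩ = ⁅g, h⁆)
    (x : (⁅(nuL G).range, (nuR G).range⁆ : Subgroup (Nu G))) (hx : x ∈ ρ.ker) :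
    (x : Nu G) ∈ Subgroup.center (Nu G) := by
  obtain ⟨r, hr1, hr2, hr3⟩ := nu_key ρ hρ (x : Nu G) x.2
  have hone : r = 1 := by
    have h1 : ρ ⟨(x : Nu G), x.2⟩ = r := hr1 x.2
    have h2 : (⟨(x : Nu G), x.2⟩ :
        (⁅(nuL G).range, (nuR G).range⁆ : Subgroup (Nu G))) = x := rfl
    rw [h2] at h1
    rw [← h1]
    exact hx
  have hb : ∀ q : G, (x : Nu G) * nuR G q = nuR G q * (x : Nu G) := by
    intro q
    have h3 : ⁅(x : Nu G), nuR G q⁆ = 1 := by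
      rw [hr3 q, hone, map_one]; group
    exact commutatorElement_eq_one_iff_mul_comm.mp h3
  have ha : ∀ q : G, (x : Nu G) * nuL G q = nuL G q * (x : Nu G) := by
    intro q
    have h4 : (nuR G q)⁻¹ * (x : Nu G) * nuR G q = (x : Nu G) := by
      calc (nuR G q)⁻¹ * (x : Nu G) * nuR G q
          = (nuR G q)⁻¹ * ((x : Nu G) * nuR G q) := by group
        _ = (nuR G q)⁻¹ * (nuR G q * (x : Nu G)) := by rw [hb q]
        _ = (x : Nu G) := by group
    have h5 : (nuL G q)⁻¹ * (x : Nu G) * nuL G q = (x : Nu G) :=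
      (nu_ab_conj x.2 q).trans h4
    calc (x : Nu G) * nuL G q
        = nuL G q * ((nuL G q)⁻¹ * (x : Nu G) * nuL G q) := by group
      _ = nuL G q * (x : Nu G) := by rw [h5]
  have hcen : ((nuL G).range ⊔ (nuR G).range : Subgroup (Nu G))
      ≤ Subgroup.centralizer {(x : Nu G)} := by
    apply sup_le
    · rintro w ⟨q, rfl⟩
      rw [Subgroup.mem_centralizer_iff]
      rintro y ⟨rfl⟩
      exact ha q
    · rintro w ⟨q, rfl⟩
      rw [Subgroup.mem_centralizer_iff]
      rintro y ⟨rfl⟩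
      exact hb q
  rw [Subgroup.mem_center_iff]
  intro w
  have hw : w ∈ Subgroup.centralizer {(x : Nu G)} := by
    apply hcen
    rw [nu_range_sup]
    trivial
  rw [Subgroup.mem_centralizer_iff] at hw
  exact (hw (x : Nu G) rfl).symm
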